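/- Let (a_n)_{n≥1} be a nonincreasing sequence of positive reals with a_1 ≤ M, and let γ > 0. Suppose that for every integer N ≥ 1 one has (2N)^{-γ} ≤ e · (a_1 a_2 ⋯ a_N)^{1/N}. Then there is a constant c > 0 (depending only on γ and M) such that a_n ≥ c (n log n)^{-γ} for all n ≥ 2. -/

import Mathlib

set_option maxHeartbeats 1000000

theorem pointwise_lower_bound_from_weyl
    (a : ℕ → ℝ) (γ M : ℝ) (hγ : 0 < γ)
    (hpos : ∀ n, 1 ≤ n → 0 < a n)
    (hmono : ∀ m n, 1 ≤ m → m ≤ n → a n ≤ a m)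
    (hM : a 1 ≤ M)
    (hweyl : ∀ N : ℕ, 1 ≤ N →
      (2 * (N : ℝ)) ^ (-γ) ≤ Real.exp 1 * (∏ j ∈ Finset.Icc 1 N, a j) ^ ((1 : ℝ) / N)) :
    ∃ c : ℝ, 0 < c ∧ ∀ n : ℕ, 2 ≤ n →
      c * ((n : ℝ) * Real.log n) ^ (-γ) ≤ a n := by
  set M' : ℝ := max M 1 with hM'def
  have hM'1 : (1:ℝ) ≤ M' := le_max_right _ _
  have hM'0 : (0:ℝ) < M' := lt_of_lt_of_le one_pos hM'1
  have hlogM' : 0 ≤ Real.log M' := Real.log_nonneg hM'1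
  refine ⟨Real.exp (-(2 + 3*γ)) * (12:ℝ) ^ (-γ) / M', by positivity, ?_⟩
  intro n hn
  have hn1 : 1 ≤ n := le_trans one_le_two hn
  have han : 0 < a n := hpos n hn1
  have hnR : (2:ℝ) ≤ (n:ℝ) := by exact_mod_cast hn
  have hn0 : (0:ℝ) < n := by linarith
  set l := Real.log n with hldef
  have hl2 : Real.log 2 ≤ l := by
    apply Real.log_le_log two_pos hnR
  have hlog2 : (0:ℝ) < Real.log 2 := Real.log_pos one_lt_two
  have hlog2' : Real.log 2 ≤ 1 := by
    have := Real.log_le_sub_one_of_pos (two_pos (α := ℝ))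
    linarith
  have hl0 : 0 < l := lt_of_lt_of_le hlog2 hl2
  set L : ℕ := ⌈l⌉₊ + 2 with hLdef
  have hLlb : l + 2 ≤ (L:ℝ) := by
    have := Nat.le_ceil l
    push_cast [hLdef]
    linarith
  have hLub : (L:ℝ) ≤ l + 3 := by
    have := Nat.ceil_lt_add_one hl0.le
    push_cast [hLdef]
    linarith
  have hLR2 : (2:ℝ) ≤ (L:ℝ) := by linarith
  set N : ℕ := n * L with hNdef
  have hNR : (N:ℝ) = (n:ℝ) * (L:ℝ) := by push_cast [hNdef]; ring
  have hnN : n ≤ N := by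
    have : 1 ≤ L := by omega
    calc n = n * 1 := (mul_one n).symm
    _ ≤ n * L := by exact Nat.mul_le_mul_left n this
  have hN1 : 1 ≤ N := le_trans hn1 hnN
  have hNR0 : (0:ℝ) < (N:ℝ) := by
    rw [hNR]; positivity
  have h2N : (0:ℝ) < 2 * (N:ℝ) := by linarith
  set D : ℕ := N - n with hDdef
  have hDR : (D:ℝ) = (n:ℝ) * ((L:ℝ) - 1) := by
    rw [hDdef]
    push_cast [Nat.cast_sub hnN, hNR]
    ring
  have hDR0 : (0:ℝ) < (D:ℝ) := by
    rw [hDR]; nlinarith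
  -- the product
  set P : ℝ := ∏ j ∈ Finset.Icc 1 N, a j with hPdef
  have hP0 : 0 < P := by
    apply Finset.prod_pos
    intro i hi
    exact hpos i (Finset.mem_Icc.mp hi).1
  -- split the product and bound it
  have hsplit : (∏ j ∈ Finset.Ioc 0 n, a j) * ∏ j ∈ Finset.Ioc n N, a j = P := by
    rw [hPdef, ← Finset.Icc_add_one_left_eq_Ioc]
    exact Finset.prod_Ioc_consecutive a (Nat.zero_le n) hnN
  have hb1 : (∏ j ∈ Finset.Ioc 0 n, a j) ≤ M' ^ n := by
    have : (∏ j ∈ Finset.Ioc 0 n, a j) ≤ ∏ j ∈ Finset.Ioc 0 n, M' := by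
      apply Finset.prod_le_prod
      · intro i hi; exact (hpos i (Finset.mem_Ioc.mp hi).1).le
      · intro i hi
        exact le_trans (hmono 1 i le_rfl (Finset.mem_Ioc.mp hi).1)
          (le_trans hM (le_max_left _ _))
    simpa [Nat.card_Ioc] using this
  have hb2 : (∏ j ∈ Finset.Ioc n N, a j) ≤ (a n) ^ D := by
    have : (∏ j ∈ Finset.Ioc n N, a j) ≤ ∏ j ∈ Finset.Ioc n N, a n := by
      apply Finset.prod_le_prod
      · intro i hi
        exact (hpos i (le_trans hn1 (Finset.mem_Ioc.mp hi).1.le)).le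
      · intro i hi
        exact hmono n i hn1 (Finset.mem_Ioc.mp hi).1.le
    simpa [Nat.card_Ioc, ← hDdef] using this
  have hprodpos1 : 0 < ∏ j ∈ Finset.Ioc 0 n, a j := by
    apply Finset.prod_pos; intro i hi; exact hpos i (Finset.mem_Ioc.mp hi).1
  have hPle : P ≤ M' ^ n * (a n) ^ D := by
    rw [← hsplit]
    apply mul_le_mul hb1 hb2 _ (by positivity)
    · apply Finset.prod_nonneg
      intro i hi
      exact (hpos i (le_trans hn1 (Finset.mem_Ioc.mp hi).1.le)).le
  -- log of the product bound
  have hlogP : Real.log P ≤ (n:ℝ) * Real.log M' + (D:ℝ) * Real.log (a n) := by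
    calc Real.log P ≤ Real.log (M' ^ n * (a n) ^ D) :=
          Real.log_le_log hP0 hPle
    _ = (n:ℝ) * Real.log M' + (D:ℝ) * Real.log (a n) := by
          rw [Real.log_mul (by positivity) (by positivity)]
          rw [Real.log_pow]
          rw [Real.log_pow]
  -- log of the Weyl inequality
  have hw := hweyl N hN1
  have hwlog : -γ * Real.log (2 * (N:ℝ)) ≤ 1 + 1/(N:ℝ) * Real.log P := by
    have h1 : Real.log ((2 * (N:ℝ)) ^ (-γ)) ≤
        Real.log (Real.exp 1 * P ^ ((1:ℝ)/(N:ℝ))) :=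
      Real.log_le_log (Real.rpow_pos_of_pos h2N _) hw
    rwa [Real.log_rpow h2N, Real.log_mul (Real.exp_ne_zero 1)
      (ne_of_gt (Real.rpow_pos_of_pos hP0 _)), Real.log_exp, Real.log_rpow hP0] at h1
  have hlogPlow : (N:ℝ) * (-γ * Real.log (2 * (N:ℝ)) - 1) ≤ Real.log P := by
    have h2 : (N:ℝ) * (-γ * Real.log (2 * (N:ℝ))) ≤
        (N:ℝ) * (1 + (1/(N:ℝ)) * Real.log P) :=
      mul_le_mul_of_nonneg_left hwlog hNR0.le
    have h3 : (N:ℝ) * (1/(N:ℝ) * Real.log P) = Real.log P := by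
      field_simp
    nlinarith [h2, h3]
  -- combine
  have hmain : (N:ℝ) * (-γ * Real.log (2 * (N:ℝ)) - 1) - (n:ℝ) * Real.log M'
      ≤ (D:ℝ) * Real.log (a n) := by linarith
  -- key bounds on log (2N)
  have hnl0 : (0:ℝ) < (n:ℝ) * l := by positivity
  have hf1 : Real.log (2 * (N:ℝ)) ≤ Real.log 12 + Real.log ((n:ℝ) * l) := by
    rw [← Real.log_mul (by norm_num) (ne_of_gt hnl0)]
    apply Real.log_le_log h2N
    -- 2 * (n * L) ≤ 12 * (n * l) since L ≤ l + 3 ≤ l (1 + 3/log 2) ≤ 6 l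
    have hL6 : (L:ℝ) ≤ 6 * l := by
      have : (3:ℝ) ≤ 5 * Real.log 2 := by
        have : (0.6931471803:ℝ) < Real.log 2 := by
          have := Real.log_two_gt_d9
          linarith
        linarith
      linarith
    rw [hNR]
    nlinarith [mul_le_mul_of_nonneg_left hL6 hn0.le]
  have hf2 : Real.log (2 * (N:ℝ)) ≤ 3 * ((L:ℝ) - 1) := by
    have hlogL : Real.log (L:ℝ) ≤ (L:ℝ) - 1 :=
      Real.log_le_sub_one_of_pos (by linarith)
    have : Real.log (2 * (N:ℝ)) = Real.log 2 + l + Real.log (L:ℝ) := by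
      rw [hNR, ← mul_assoc, Real.log_mul (by positivity) (by linarith),
        Real.log_mul (by norm_num) (ne_of_gt hn0)]
    rw [this]
    linarith
  -- final log inequality
  have hfinal : (-(2 + 3*γ) - γ * Real.log 12 - Real.log M') - γ * Real.log ((n:ℝ) * l)
      ≤ Real.log (a n) := by
    rw [← mul_le_mul_iff_right₀ hDR0]
    have A : γ * (D:ℝ) * Real.log (2 * (N:ℝ)) ≤
        γ * (D:ℝ) * (Real.log 12 + Real.log ((n:ℝ) * l)) :=
      mul_le_mul_of_nonneg_left hf1 (by positivity)
    have B : γ * (n:ℝ) * Real.log (2 * (N:ℝ)) ≤ γ * (n:ℝ) * (3 * ((L:ℝ) - 1)) :=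
      mul_le_mul_of_nonneg_left hf2 (by positivity)
    have C : 0 ≤ (n:ℝ) * (((L:ℝ) - 2) * Real.log M') :=
      mul_nonneg hn0.le (mul_nonneg (by linarith) hlogM')
    have E : 0 ≤ (n:ℝ) * ((L:ℝ) - 2) := mul_nonneg hn0.le (by linarith)
    rw [hNR, hDR] at hmain
    rw [hNR, hDR] at A
    rw [hNR] at B
    rw [hDR]
    nlinarith [A, B, C, E, hmain]
  -- exponentiate
  have key : Real.exp ((-(2 + 3*γ) - γ * Real.log 12 - Real.log M') - γ * Real.log ((n:ℝ) * l))
      ≤ a n := by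
    calc _ ≤ Real.exp (Real.log (a n)) := Real.exp_le_exp.mpr hfinal
    _ = a n := Real.exp_log han
  have hce : Real.exp ((-(2 + 3*γ) - γ * Real.log 12 - Real.log M') - γ * Real.log ((n:ℝ) * l))
      = Real.exp (-(2 + 3*γ)) * (12:ℝ) ^ (-γ) / M' * ((n:ℝ) * l) ^ (-γ) := by
    rw [show (-(2 + 3*γ) - γ * Real.log 12 - Real.log M') - γ * Real.log ((n:ℝ) * l)
        = (-(2 + 3*γ)) + (Real.log 12 * (-γ)) + (-(Real.log M')) + (Real.log ((n:ℝ) * l) * (-γ))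
        by ring]
    rw [Real.exp_add, Real.exp_add, Real.exp_add,
      ← Real.rpow_def_of_pos (by norm_num : (0:ℝ) < 12),
      ← Real.rpow_def_of_pos hnl0,
      show Real.exp (-Real.log M') = M'⁻¹ by rw [Real.exp_neg, Real.exp_log hM'0]]
    ring
  rw [← hce]
  exact key
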